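/- arXiv:1404.6331 — 3 statements merged into one kernel-verified Lean document; each statement's English description precedes it below -/
import Mathlib

section
/- Let X and X_a be {0,1}-valued random variables with an arbitrary joint distribution such that X ~ Bernoulli(P) and Pr(X_a ≠ X) ≤ N' for some 0 ≤ N' ≤ 1/2, and let Z ~ Bernoulli(N) with 0 ≤ N ≤ 1/2 be independent of (X, X_a). Set Y = X_a ⊕ Z. Then I(X; Y) ≥ h(P) − h(N ∗ N'). -/
open scoped BigOperators

noncomputable section

/-- `p` is a probability mass function on the finite type `α`. -/
def IsPMF {α : Type} [Fintype α] (p : α → ℝ) : Prop :=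
  (∀ a, 0 ≤ p a) ∧ ∑ a, p a = 1

/-- Shannon entropy (in bits) of a pmf on a finite type. -/
def ent {α : Type} [Fintype α] (p : α → ℝ) : ℝ :=
  ∑ a, -(p a * Real.logb 2 (p a))

/-- Mutual information (in bits) `I(A;B)` of a joint pmf on `α × β`. -/
def mutInfo {α β : Type} [Fintype α] [Fintype β] (p : α × β → ℝ) : ℝ :=
  ∑ z : α × β, p z * Real.logb 2 (p z / ((∑ b, p (z.1, b)) * (∑ a, p (a, z.2))))

/-- Conditional entropy `H(A|B)` (in bits) of a joint pmf on `α × β`,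
via `H(A|B) = H(A,B) − H(B)`. -/
def condEnt {α β : Type} [Fintype α] [Fintype β] (p : α × β → ℝ) : ℝ :=
  ent p - ent (fun b => ∑ a, p (a, b))

/-- The binary entropy function `h`. -/
def hb (x : ℝ) : ℝ := -(x * Real.logb 2 x) - (1 - x) * Real.logb 2 (1 - x)

/-- Binary convolution `α ∗ β = α(1−β) + β(1−α)`. -/
def conv (a b : ℝ) : ℝ := a * (1 - b) + b * (1 - a)

/-- The Bernoulli pmf on `Bool` with parameter `t`. -/
def bern (t : ℝ) : Bool → ℝ := fun b => if b then t else 1 - t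

lemma hb_eq (x : ℝ) : hb x = Real.binEntropy x / Real.log 2 := by
  simp [hb, Real.binEntropy, Real.logb, Real.log_inv]; ring

lemma hb_mono {x y : ℝ} (hx : 0 ≤ x) (hxy : x ≤ y) (hy : y ≤ 1/2) : hb x ≤ hb y := by
  rw [hb_eq, hb_eq]
  have h2 : (0:ℝ) < Real.log 2 := Real.log_pos (by norm_num)
  gcongr
  exact Real.binEntropy_strictMonoOn.monotoneOn
    ⟨hx, by norm_num; linarith⟩ ⟨by linarith, by norm_num; linarith⟩ hxy

lemma hb_concave_pt {s1 s2 t1 t2 : ℝ} (hs1 : 0 ≤ s1) (hs2 : 0 ≤ s2) (hsum : s1 + s2 = 1)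
    (ht1 : t1 ∈ Set.Icc (0:ℝ) 1) (ht2 : t2 ∈ Set.Icc (0:ℝ) 1) :
    s1 * hb t1 + s2 * hb t2 ≤ hb (s1 * t1 + s2 * t2) := by
  have h2 : (0:ℝ) < Real.log 2 := Real.log_pos (by norm_num)
  have h := Real.strictConcave_binEntropy.concaveOn.2 ht1 ht2 hs1 hs2 hsum
  simp only [smul_eq_mul] at h
  rw [hb_eq, hb_eq, hb_eq, mul_div_assoc', mul_div_assoc', ← add_div]
  gcongr

lemma wlog_eq {w s : ℝ} (hw : 0 ≤ w) (hs : 0 < s) :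
    s * ((w/s) * Real.logb 2 (w/s)) = w * Real.logb 2 w - w * Real.logb 2 s := by
  rcases eq_or_lt_of_le hw with h | h
  · simp [← h]
  · rw [Real.logb_div h.ne' hs.ne']
    field_simp

lemma part_eq {u v : ℝ} (hu : 0 ≤ u) (hv : 0 ≤ v) :
    -(u * Real.logb 2 u) - v * Real.logb 2 v + (u+v) * Real.logb 2 (u+v)
      = (u+v) * hb (v/(u+v)) := by
  rcases eq_or_lt_of_le (add_nonneg hu hv) with h | h
  · have hu0 : u = 0 := by linarith
    have hv0 : v = 0 := by linarith
    simp [hu0, hv0, hb]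
  · have h1 : 1 - v/(u+v) = u/(u+v) := by field_simp; ring
    rw [hb, h1]
    rw [show (u+v) * (-(v / (u + v) * Real.logb 2 (v / (u + v))) - u / (u + v) * Real.logb 2 (u / (u + v))) = -((u+v)*((v/(u+v)) * Real.logb 2 (v/(u+v)))) - (u+v)*((u/(u+v)) * Real.logb 2 (u/(u+v))) from by ring]
    rw [wlog_eq hv h, wlog_eq hu h]
    ring

lemma hb_one_sub (x : ℝ) : hb (1 - x) = hb x := by
  rw [hb_eq, hb_eq, Real.binEntropy_one_sub]

lemma hb_flip {b d : ℝ} (hb' : 0 ≤ b) (hd : 0 ≤ d) :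
    hb (d/(b+d)) = hb (b/(b+d)) := by
  rcases eq_or_lt_of_le (add_nonneg hb' hd) with h | h
  · simp [← h]
  · rw [show d/(b+d) = 1 - b/(b+d) by field_simp; ring, hb_one_sub]

lemma frac_mem {u s : ℝ} (hu : 0 ≤ u) (hus : u ≤ s) :
    u/s ∈ Set.Icc (0:ℝ) 1 ∧ s * (u/s) = u := by
  rcases eq_or_lt_of_le (hu.trans hus) with h | h
  · have : u = 0 := le_antisymm (hus.trans h.symm.le) hu
    simp [this]
  · exact ⟨⟨div_nonneg hu h.le, (div_le_one h).2 hus⟩, mul_div_cancel₀ _ h.ne'⟩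

lemma cond_bound {a b c d : ℝ} (ha : 0 ≤ a) (hb' : 0 ≤ b) (hc : 0 ≤ c) (hd : 0 ≤ d)
    (hsum : a + b + c + d = 1) :
    (-(a * Real.logb 2 a) - c * Real.logb 2 c + (a+c) * Real.logb 2 (a+c))
      + (-(b * Real.logb 2 b) - d * Real.logb 2 d + (b+d) * Real.logb 2 (b+d))
      ≤ hb (b + c) := by
  rw [part_eq ha hc, part_eq hb' hd, hb_flip hb' hd]
  obtain ⟨m1, e1⟩ := frac_mem hc (by linarith : c ≤ a + c)
  obtain ⟨m2, e2⟩ := frac_mem hb' (by linarith : b ≤ b + d)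
  have key := hb_concave_pt (by linarith : (0:ℝ) ≤ a + c) (by linarith : (0:ℝ) ≤ b + d)
    (by linarith) m1 m2
  rw [e1, e2] at key
  rwa [show c + b = b + c by ring] at key

lemma term_eq {q m1 m2 : ℝ} (hq : 0 ≤ q) (h1 : q ≤ m1) (h2 : q ≤ m2) :
    q * Real.logb 2 (q / (m1 * m2))
      = q * Real.logb 2 q - q * Real.logb 2 m1 - q * Real.logb 2 m2 := by
  rcases eq_or_lt_of_le hq with h | h
  · simp [← h]
  · rw [Real.logb_div h.ne' (mul_pos (h.trans_le h1) (h.trans_le h2)).ne',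
      Real.logb_mul (by linarith : m1 ≠ 0) (by linarith : m2 ≠ 0)]
    ring

lemma main_ineq {a b c d P N N' e : ℝ}
    (ha0 : 0 ≤ a) (hb0 : 0 ≤ b) (hc0 : 0 ≤ c) (hd0 : 0 ≤ d)
    (hsum : a + b + c + d = 1) (hP : d + c = P) (hP' : b + a = 1 - P)
    (hbc : b + c = conv N e) (hee : e ≤ N')
    (hN0 : 0 ≤ N) (hN : N ≤ 1/2) (hN'0 : 0 ≤ N') (hN' : N' ≤ 1/2) :
    hb P - hb (conv N N')
      ≤ d * Real.logb 2 (d / ((d + c) * (d + b)))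
        + c * Real.logb 2 (c / ((d + c) * (c + a)))
        + (b * Real.logb 2 (b / ((b + a) * (d + b)))
        + a * Real.logb 2 (a / ((b + a) * (c + a)))) := by
  rw [term_eq hd0 (by linarith : d ≤ d + c) (by linarith : d ≤ d + b),
      term_eq hc0 (by linarith : c ≤ d + c) (by linarith : c ≤ c + a),
      term_eq hb0 (by linarith : b ≤ b + a) (by linarith : b ≤ d + b),
      term_eq ha0 (by linarith : a ≤ b + a) (by linarith : a ≤ c + a),
      show c + a = a + c from add_comm c a, show d + b = b + d from add_comm d b]
  have hbP : hb P = -((d + c) * Real.logb 2 (d + c)) - (b + a) * Real.logb 2 (b + a) := by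
    rw [hb, show (1:ℝ) - P = b + a by linarith, ← hP]
  have cond := cond_bound ha0 hb0 hc0 hd0 hsum
  have h1 : b + c ≤ conv N N' := by
    rw [hbc]; simp only [conv]
    nlinarith [mul_nonneg (sub_nonneg.2 hee) (by linarith : (0:ℝ) ≤ 1 - 2*N)]
  have h2 : conv N N' ≤ 1/2 := by
    simp only [conv]
    nlinarith [mul_nonneg (by linarith : (0:ℝ) ≤ 1 - 2*N) (by linarith : (0:ℝ) ≤ 1 - 2*N')]
  have hmono : hb (b + c) ≤ hb (conv N N') := hb_mono (by linarith) h1 h2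
  rw [hbP]
  linarith [cond, hmono]


/-- Let `X, X_a` be bits with an arbitrary joint pmf `p` such that
`X ∼ Bernoulli(P)` and `Pr(X_a ≠ X) ≤ N' ≤ 1/2`, and let `Z ∼ Bernoulli(N)`
(`N ≤ 1/2`) be independent of `(X, X_a)`; set `Y = X_a ⊕ Z` (so
`Pr(Y = y | X_a = a) = 1 − N` if `y = a` and `N` otherwise).  Then
`I(X;Y) ≥ h(P) − h(N ∗ N')`. -/
theorem mutInfo_ge_of_flip_le (P N' N : ℝ)
    (hN'0 : 0 ≤ N') (hN' : N' ≤ 1 / 2) (hN0 : 0 ≤ N) (hN : N ≤ 1 / 2)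
    (p : Bool × Bool → ℝ) (hp : IsPMF p)
    (hX : ∑ b, p (true, b) = P)
    (hflip : ∑ z : Bool × Bool, (if z.2 = z.1 then 0 else p z) ≤ N') :
    hb P - hb (conv N N')
      ≤ mutInfo (fun xy : Bool × Bool =>
          ∑ xa : Bool, p (xy.1, xa) * (if xy.2 = xa then 1 - N else N)) := by
  obtain ⟨hpos, hsum⟩ := hp
  have h00 := hpos (false, false)
  have h01 := hpos (false, true)
  have h10 := hpos (true, false)
  have h11 := hpos (true, true)
  have hN1 : (0:ℝ) ≤ 1 - N := by linarith
  simp only [Fintype.sum_prod_type, Fintype.sum_bool] at hsum hX hflip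
  norm_num at hflip
  simp only [mutInfo, Fintype.sum_prod_type, Fintype.sum_bool]
  norm_num
  have key := main_ineq
    (a := p (false, true) * N + p (false, false) * (1 - N))
    (b := p (false, true) * (1 - N) + p (false, false) * N)
    (c := p (true, true) * N + p (true, false) * (1 - N))
    (d := p (true, true) * (1 - N) + p (true, false) * N)
    (P := P) (N := N) (N' := N') (e := p (true, false) + p (false, true))
    (add_nonneg (mul_nonneg h01 hN0) (mul_nonneg h00 hN1))
    (add_nonneg (mul_nonneg h01 hN1) (mul_nonneg h00 hN0))
    (add_nonneg (mul_nonneg h11 hN0) (mul_nonneg h10 hN1))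
    (add_nonneg (mul_nonneg h11 hN1) (mul_nonneg h10 hN0))
    (by linear_combination hsum) (by linear_combination hX)
    (by linear_combination hsum - hX)
    (by simp only [conv]; linear_combination N * hsum)
    (by linarith [hflip]) hN0 hN hN'0 hN'
  linarith [key]
end
end

section
/- Let X ~ Bernoulli(P) on {0,1}, let E₁ ~ Bernoulli(N') and E₂ ~ Bernoulli(N) be independent of X and of each other (0 < N', N < 1), and define the {0,1,e}-valued random variables X_a = e if E₁ = 1 and X_a = X otherwise, and Y = e if E₁ = 1 or E₂ = 1 and Y = X otherwise. Then H(X_a | Y) = N̄·h(N'/N̄) + N(1 − N')·h(P), where N̄ = N(1 − N') + N'. -/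
open scoped BigOperators

noncomputable section

private lemma l1_aux (a m : ℝ) (ha : 0 < a) (hm : 0 < m) :
    (a+m) * hb (a/(a+m)) = -(a * Real.logb 2 a) - m * Real.logb 2 m + (a+m) * Real.logb 2 (a+m) := by
  have hs : 0 < a + m := by linarith
  have h1 : 1 - a/(a+m) = m/(a+m) := by field_simp; ring
  rw [hb, h1, Real.logb_div ha.ne' hs.ne', Real.logb_div hm.ne' hs.ne']
  field_simp
  ring

private lemma key_aux (P N' N : ℝ)
    (hP0 : 0 ≤ P) (hP1 : P ≤ 1) (hN'0 : 0 < N') (hN'1 : N' < 1)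
    (hN0 : 0 < N) (hN1 : N < 1) :
    -(P*(N*(1-N')) * Real.logb 2 (P*(N*(1-N'))))
      - ((1-P)*(N*(1-N')) * Real.logb 2 ((1-P)*(N*(1-N'))))
      - N' * Real.logb 2 N'
      + (N*(1-N')+N') * Real.logb 2 (N*(1-N')+N')
    = (N*(1-N')+N') * hb (N'/(N*(1-N')+N')) + (N*(1-N')) * hb P := by
  have hm : 0 < N*(1-N') := by nlinarith
  have h1 : (N*(1-N')+N') * hb (N'/(N*(1-N')+N'))
      = -(N' * Real.logb 2 N') - (N*(1-N')) * Real.logb 2 (N*(1-N'))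
        + (N*(1-N')+N') * Real.logb 2 (N*(1-N')+N') := by
    have h := l1_aux N' (N*(1-N')) hN'0 hm
    rw [add_comm N' (N*(1-N'))] at h
    exact h
  have hb0 : hb 0 = 0 := by simp [hb]
  have hb1 : hb 1 = 0 := by simp [hb]
  rcases eq_or_lt_of_le hP0 with h0 | h0
  · rw [← h0, hb0, h1]; norm_num; ring
  rcases eq_or_lt_of_le hP1 with h1' | h1'
  · rw [h1', hb1, h1]; norm_num; ring
  rw [Real.logb_mul h0.ne' hm.ne', Real.logb_mul (by linarith : (1:ℝ)-P ≠ 0) hm.ne', h1, hb]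
  ring

/-- Let `X ∼ Bernoulli(P)` on `{0,1}`, and let `E₁ ∼ Bernoulli(N')`,
`E₂ ∼ Bernoulli(N)` (`0 < N', N < 1`) be independent of `X` and of each other.
With the erasure symbol `e = none`, set `X_a = e` if `E₁ = 1`, `X_a = X`
otherwise, and `Y = e` if `E₁ = 1` or `E₂ = 1`, `Y = X` otherwise.  Then
`H(X_a | Y) = N̄·h(N'/N̄) + N(1−N')·h(P)` where `N̄ = N(1−N') + N'`. -/
theorem condEnt_erasure (P N' N : ℝ)
    (hP0 : 0 ≤ P) (hP1 : P ≤ 1) (hN'0 : 0 < N') (hN'1 : N' < 1)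
    (hN0 : 0 < N) (hN1 : N < 1) :
    condEnt (fun ay : Option Bool × Option Bool =>
        ∑ x : Bool, ∑ e1 : Bool, ∑ e2 : Bool,
          bern P x * bern N' e1 * bern N e2 *
            ((if (if e1 then none else some x) = ay.1 then 1 else 0) *
             (if (if e1 || e2 then none else some x) = ay.2 then 1 else 0)))
      = (N * (1 - N') + N') * hb (N' / (N * (1 - N') + N'))
        + N * (1 - N') * hb P := by
  have hk := key_aux P N' N hP0 hP1 hN'0 hN'1 hN0 hN1
  unfold condEnt ent
  simp only [Fintype.sum_prod_type, Fintype.sum_option, Fintype.sum_bool, bern]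
  simp only [if_true, if_false, Bool.false_or, Bool.true_or, reduceIte, reduceCtorEq]
  norm_num
  ring_nf
  rw [show N' - N' * N + N = N*(1-N')+N' from by ring,
      show -(P * N' * N) + P * N = P*(N*(1-N')) from by ring,
      show P * N' * N - P * N - N' * N + N = (1-P)*(N*(1-N')) from by ring,
      ← div_eq_mul_inv]
  linear_combination hk
end
end

section
/- (Varshamov bound) Let F be a finite field with q elements and let n ≥ k ≥ 1 and d ≥ 2 be integers. If Σ_{l=0}^{d−2} C(n−1, l)·(q − 1)^l < q^{n−k}, then there exists a k-dimensional linear subspace C of F^n such that every nonzero element of C has Hamming weight at least d; equivalently, C is a linear code of length n, dimension k, and minimum Hamming distance at least d. -/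
open scoped BigOperators

noncomputable section

section Aux
open Finset

open Finset

variable {ι F : Type} [Fintype ι] [DecidableEq ι] [Fintype F] [DecidableEq F]

lemma card_supp_eq [Zero F] (s : Finset ι) :
    (Finset.univ.filter (fun a : ι → F => Finset.univ.filter (fun i => a i ≠ 0) = s)).card
      = (Fintype.card F - 1) ^ s.card := by
  rw [← Fintype.card_subtype]
  have e : {a : ι → F // Finset.univ.filter (fun i => a i ≠ 0) = s} ≃
      (s → {x : F // x ≠ 0}) := by
    refine ⟨fun a i => ⟨a.1 i, ?_⟩, fun g => ⟨fun i => if h : i ∈ s then (g ⟨i, h⟩).1 else 0, ?_⟩,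
      ?_, ?_⟩
    · have hi : (i : ι) ∈ Finset.univ.filter (fun i => a.1 i ≠ 0) := by
        rw [a.2]; exact i.2
      simpa using hi
    · ext i
      simp only [mem_filter, mem_univ, true_and]
      constructor
      · intro h
        by_contra hi
        simp [hi] at h
      · intro hi
        simpa [hi] using (g ⟨i, hi⟩).2
    · intro a
      ext i
      by_cases h : i ∈ s
      · simp [h]
      · have : a.1 i = 0 := by
          by_contra hne
          exact h (a.2 ▸ (by simpa using hne))
        simp [h, this]
    · intro g
      ext i
      simp [i.2]
  rw [Fintype.card_congr e, Fintype.card_fun, Fintype.card_coe]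
  congr 1
  have : Fintype.card {x : F // ¬ x = 0} = Fintype.card F - Fintype.card {x : F // x = 0} :=
    Fintype.card_subtype_compl _
  simpa using this

lemma card_norm_eq [Zero F] (l : ℕ) :
    (Finset.univ.filter (fun a : ι → F => hammingNorm a = l)).card
      = (Fintype.card ι).choose l * (Fintype.card F - 1) ^ l := by
  rw [Finset.card_eq_sum_card_fiberwise
    (f := fun a : ι → F => Finset.univ.filter (fun i => a i ≠ 0))
    (t := Finset.univ.powersetCard l) (by
      intro a ha
      simp only [coe_filter, Set.mem_setOf_eq, mem_filter, mem_univ, true_and] at ha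
      simpa [Finset.mem_powersetCard_univ, hammingNorm] using ha)]
  have key : ∀ s ∈ Finset.univ.powersetCard l,
      ((Finset.univ.filter (fun a : ι → F => hammingNorm a = l)).filter
        (fun a => Finset.univ.filter (fun i => a i ≠ 0) = s)).card
      = (Fintype.card F - 1) ^ l := by
    intro s hs
    rw [Finset.mem_powersetCard_univ] at hs
    rw [Finset.filter_filter]
    have : ∀ a : ι → F, (hammingNorm a = l ∧ Finset.univ.filter (fun i => a i ≠ 0) = s)
        ↔ Finset.univ.filter (fun i => a i ≠ 0) = s := by
      intro a
      constructor
      · exact fun h => h.2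
      · intro h
        exact ⟨by rw [hammingNorm, h, hs], h⟩
    simp_rw [this]
    rw [card_supp_eq, hs]
  rw [Finset.sum_congr rfl key, Finset.sum_const, Finset.card_powersetCard, card_univ, smul_eq_mul]

lemma card_ball [Zero F] (r : ℕ) :
    (Finset.univ.filter (fun a : ι → F => hammingNorm a ≤ r)).card
      = ∑ l ∈ Finset.range (r + 1), (Fintype.card ι).choose l * (Fintype.card F - 1) ^ l := by
  rw [Finset.card_eq_sum_card_fiberwise (f := fun a : ι → F => hammingNorm a)
    (t := Finset.range (r + 1)) (by
      intro a ha
      simp only [coe_filter, Set.mem_setOf_eq, mem_filter, mem_univ, true_and] at ha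
      simpa [Nat.lt_succ_iff] using ha)]
  refine Finset.sum_congr rfl fun l hl => ?_
  rw [Finset.mem_range, Nat.lt_succ_iff] at hl
  rw [Finset.filter_filter]
  rw [← card_norm_eq (ι := ι) (F := F) l]
  congr 1
  apply Finset.filter_congr
  intro a _
  simp only [and_iff_right_iff_imp]
  intro h; omega

lemma greedy (F : Type) [Field F] [Fintype F] [DecidableEq F] (m r : ℕ)
    (j : ℕ)
    (hb : ∀ i < j, ∑ l ∈ Finset.range (r + 1), i.choose l * (Fintype.card F - 1) ^ l
      < Fintype.card F ^ m) :
    ∃ c : Fin j → (Fin m → F), ∀ a : Fin j → F, hammingNorm a ≤ r + 1 →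
      ∑ i, a i • c i = 0 → a = 0 := by
  induction j with
  | zero => exact ⟨fun i => 0, fun a _ _ => Subsingleton.elim _ _⟩
  | succ j ih =>
    obtain ⟨c, hc⟩ := ih (fun i hi => hb i (Nat.lt_succ_of_lt hi))
    -- the bad set: image of ball of radius r
    set B : Finset (Fin m → F) :=
      ((Finset.univ.filter (fun a : Fin j → F => hammingNorm a ≤ r)).image
        (fun a => ∑ i, a i • c i)) with hB
    have hcardB : B.card < Fintype.card (Fin m → F) := by
      calc B.card ≤ (Finset.univ.filter (fun a : Fin j → F => hammingNorm a ≤ r)).card :=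
            Finset.card_image_le
        _ = ∑ l ∈ Finset.range (r + 1), (Fintype.card (Fin j)).choose l *
              (Fintype.card F - 1) ^ l := card_ball r
        _ < Fintype.card F ^ m := by simpa using hb j (Nat.lt_succ_self j)
        _ = Fintype.card (Fin m → F) := by simp [Fintype.card_fun]
    obtain ⟨v, hv⟩ : ∃ v : Fin m → F, v ∉ B := by
      by_contra h
      push_neg at h
      have : (Finset.univ : Finset (Fin m → F)) ⊆ B := fun x _ => h x
      have := Finset.card_le_card this
      rw [Finset.card_univ] at this
      omega
    refine ⟨Fin.snoc c v, fun a ha hsum => ?_⟩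
    have hsplit : ∑ i : Fin (j+1), a i • Fin.snoc c v i
        = (∑ i : Fin j, a i.castSucc • c i) + a (Fin.last j) • v := by
      rw [Fin.sum_univ_castSucc]
      simp [Fin.snoc_castSucc, Fin.snoc_last]
    have hnorm : hammingNorm a = hammingNorm (fun i : Fin j => a i.castSucc)
        + (if a (Fin.last j) ≠ 0 then 1 else 0) := by
      simp only [hammingNorm, Finset.card_filter]
      rw [Fin.sum_univ_castSucc]
    by_cases hlast : a (Fin.last j) = 0
    · have h0 : ∑ i : Fin j, a i.castSucc • c i = 0 := by
        rw [hsplit, hlast] at hsum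
        simpa using hsum
      have hn : hammingNorm (fun i : Fin j => a i.castSucc) ≤ r + 1 := by
        rw [hnorm] at ha; omega
      have := hc _ hn h0
      funext i
      refine Fin.lastCases hlast (fun i => ?_) i
      exact congrFun this i
    · exfalso
      apply hv
      rw [hB, Finset.mem_image]
      refine ⟨fun i => (-(a (Fin.last j))⁻¹) * a i.castSucc, ?_, ?_⟩
      · simp only [Finset.mem_filter, Finset.mem_univ, true_and]
        calc hammingNorm (fun i : Fin j => (-(a (Fin.last j))⁻¹) * a i.castSucc)
            ≤ hammingNorm (fun i : Fin j => a i.castSucc) :=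
              hammingNorm_comp_le_hammingNorm (fun _ x => (-(a (Fin.last j))⁻¹) * x)
                (fun _ => mul_zero _)
          _ ≤ r := by rw [hnorm] at ha; simp [hlast] at ha; omega
      · rw [hsplit] at hsum
        have : a (Fin.last j) • v = - ∑ i : Fin j, a i.castSucc • c i := by
          rw [eq_neg_iff_add_eq_zero, add_comm]; exact hsum
        have hv' : v = (-(a (Fin.last j))⁻¹) • ∑ i : Fin j, a i.castSucc • c i := by
          rw [neg_smul, ← smul_neg, ← this, ← smul_assoc, smul_eq_mul,
            inv_mul_cancel₀ hlast, one_smul]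
        rw [hv', Finset.smul_sum]
        refine Finset.sum_congr rfl fun i _ => ?_
        rw [smul_smul]
end Aux

/-- **Varshamov bound.** Let `F` be a finite field with `q` elements, and let
`n ≥ k ≥ 1` and `d ≥ 2`.  If `Σ_{l=0}^{d−2} C(n−1,l)·(q−1)^l < q^{n−k}`, then
there exists a `k`-dimensional linear subspace of `F^n` all of whose nonzero
elements have Hamming weight at least `d`; equivalently, a linear code of
length `n`, dimension `k`, and minimum Hamming distance at least `d`. -/
theorem varshamov_bound (F : Type) [Field F] [Fintype F] [DecidableEq F]
    (n k d : ℕ) (hk : 1 ≤ k) (hkn : k ≤ n) (hd : 2 ≤ d)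
    (hvol : ∑ l ∈ Finset.range (d - 1),
        (n - 1).choose l * (Fintype.card F - 1) ^ l
      < Fintype.card F ^ (n - k)) :
    ∃ C : Submodule F (Fin n → F),
      Module.finrank F C = k ∧
      ∀ v ∈ C, v ≠ 0 → d ≤ hammingNorm v := by
  set m := n - k with hm
  have hrd : d - 2 + 1 = d - 1 := by omega
  obtain ⟨c, hc⟩ := greedy F m (d - 2) n (fun i hi => by
    calc ∑ l ∈ Finset.range (d - 2 + 1), i.choose l * (Fintype.card F - 1) ^ l
        ≤ ∑ l ∈ Finset.range (d - 1), (n - 1).choose l * (Fintype.card F - 1) ^ l := by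
          rw [hrd]
          exact Finset.sum_le_sum fun l _ =>
            Nat.mul_le_mul_right _ (Nat.choose_le_choose l (by omega))
      _ < Fintype.card F ^ m := hvol)
  set H : (Fin n → F) →ₗ[F] (Fin m → F) := Fintype.linearCombination F c with hH
  set K := LinearMap.ker H with hK
  -- every nonzero element of K has weight ≥ d
  have hKw : ∀ v ∈ K, v ≠ 0 → d ≤ hammingNorm v := by
    intro v hvK hv0
    by_contra hlt
    push_neg at hlt
    apply hv0
    apply hc v (by omega)
    have := hvK
    rw [hK, LinearMap.mem_ker, hH, Fintype.linearCombination_apply] at this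
    exact this
  -- finrank K ≥ k
  have hrank : k ≤ Module.finrank F K := by
    have h1 : Module.finrank F (LinearMap.range H) + Module.finrank F K
        = Module.finrank F (Fin n → F) := LinearMap.finrank_range_add_finrank_ker H
    have h2 : Module.finrank F (LinearMap.range H) ≤ Module.finrank F (Fin m → F) :=
      Submodule.finrank_le _
    rw [Module.finrank_pi] at h1
    rw [Module.finrank_pi] at h2
    simp only [Fintype.card_fin] at h1 h2
    omega
  -- take a k-dimensional subspace of K
  classical
  let b := Module.finBasis F K
  have hcard : k ≤ Module.finrank F K := hrank
  let f : Fin k → (Fin n → F) := fun i => (b (Fin.castLE hcard i) : Fin n → F)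
  have hli : LinearIndependent F f := by
    have h1 : LinearIndependent F (fun i : Fin (Module.finrank F K) => (b i : Fin n → F)) :=
      b.linearIndependent.map' K.subtype K.ker_subtype
    exact h1.comp (Fin.castLE hcard) (Fin.castLE_injective hcard)
  refine ⟨Submodule.span F (Set.range f), ?_, ?_⟩
  · rw [finrank_span_eq_card hli, Fintype.card_fin]
  · intro v hv hv0
    apply hKw v _ hv0
    have hsub : Submodule.span F (Set.range f) ≤ K := by
      rw [Submodule.span_le]
      rintro _ ⟨i, rfl⟩
      exact (b (Fin.castLE hcard i)).2
    exact hsub hv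
end
end
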